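/- For every A-module P and every k ≥ 0, each linear differential operator Δ : P → Q of order ≤ k factors uniquely through the jet map jetᵏ : P → Jetᵏ(P): there is a unique A-linear map sb(Δ) : Jetᵏ(P) → Q with Δ = sb(Δ) ∘ jetᵏ. This yields a natural bijection Diffᵏ(P,Q) ≅ Hom_A(Jetᵏ(P), Q). -/

import Mathlib

open scoped TensorProduct

/-!
STATEMENT 4: every linear differential operator `Δ : P → Q` of order `≤ k` factors
uniquely through the jet map `jetᵏ : P → Jetᵏ(P) = (A ⊗_ℝ P)/M_{k+1}` via a unique
`A`-linear symbol `sb(Δ)`, giving `Diffᵏ(P,Q) ≅ Hom_A(Jetᵏ(P), Q)`.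
-/

noncomputable section

section Defs

variable (A : Type*) [CommRing A] [Algebra ℝ A]
variable (P : Type*) [AddCommGroup P] [Module ℝ P] [Module A P] [IsScalarTower ℝ A P]

/-- multiplication by `b` on `A`, as an ℝ-linear map. -/
def mulA (b : A) : A →ₗ[ℝ] A := LinearMap.mulLeft ℝ b

/-- scalar multiplication by `b` on `P`, as an ℝ-linear map. -/
def smulP (b : A) : P →ₗ[ℝ] P where
  toFun p := b • p
  map_add' := smul_add b
  map_smul' r p := smul_comm b r p

/-- `δ^b (a ⊗ p) = (ba) ⊗ p − a ⊗ (bp)` on `A ⊗_ℝ P`. -/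
def deltaTensor (b : A) : (A ⊗[ℝ] P) →ₗ[ℝ] (A ⊗[ℝ] P) :=
  TensorProduct.map (mulA A b) LinearMap.id - TensorProduct.map LinearMap.id (smulP A P b)

/-- The `A`-submodule `M_{k+1}` of `A ⊗_ℝ P` spanned by all `δ^{a_0}⋯δ^{a_k}(x)`. -/
def jetSubmodule (k : ℕ) : Submodule A (A ⊗[ℝ] P) :=
  Submodule.span A
    {x : A ⊗[ℝ] P | ∃ (l : List A) (y : A ⊗[ℝ] P),
      l.length = k + 1 ∧ l.foldr (fun b z => deltaTensor A P b z) y = x}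

/-- The `k`-th jet module `Jetᵏ(P)`. -/
def Jet (k : ℕ) := (A ⊗[ℝ] P) ⧸ jetSubmodule A P k

instance (k : ℕ) : AddCommGroup (Jet A P k) :=
  inferInstanceAs (AddCommGroup ((A ⊗[ℝ] P) ⧸ jetSubmodule A P k))

instance (k : ℕ) : Module A (Jet A P k) :=
  inferInstanceAs (Module A ((A ⊗[ℝ] P) ⧸ jetSubmodule A P k))

/-- The jet map `jetᵏ(p) = 1 ⊗ p + M_{k+1}`. -/
def jetMap (k : ℕ) (p : P) : Jet A P k :=
  Submodule.Quotient.mk ((1 : A) ⊗ₜ p)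

/-- `δ_a Δ = a·Δ − Δ·a` on maps between `A`-modules. -/
def deltaOp {Q R : Type*} [AddCommGroup Q] [AddCommGroup R] [Module A Q] [Module A R]
    (a : A) (Δ : Q → R) : Q → R :=
  fun q => a • Δ q - Δ (a • q)

/-- `Δ` is a linear differential operator of order `≤ k`. -/
def IsDiffOp {Q R : Type*} [AddCommGroup Q] [AddCommGroup R] [Module A Q] [Module A R]
    (k : ℕ) (Δ : Q → R) : Prop :=
  ∀ l : List A, l.length = k + 1 → l.foldr (deltaOp A) Δ = 0

end Defs

section Aux

variable {A : Type*} [CommRing A] [Algebra ℝ A]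
variable {P : Type*} [AddCommGroup P] [Module ℝ P] [Module A P] [IsScalarTower ℝ A P]
variable {Q : Type*} [AddCommGroup Q] [Module ℝ Q] [Module A Q] [IsScalarTower ℝ A Q]

/-- `deltaOp` as an ℝ-linear map. -/
def deltaOpL (b : A) (f : P →ₗ[ℝ] Q) : P →ₗ[ℝ] Q where
  toFun := deltaOp A b ⇑f
  map_add' p q := by
    simp only [deltaOp, smul_add, map_add]
    abel
  map_smul' r p := by
    simp only [deltaOp, RingHom.id_apply, smul_sub,
      show ∀ x : P, b • r • x = r • b • x from fun x => (smul_comm r b x).symm,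
      map_smul]
    rw [(smul_comm r b (f p)).symm]

lemma deltaOpL_coe (b : A) (f : P →ₗ[ℝ] Q) : ⇑(deltaOpL b f) = deltaOp A b ⇑f := rfl

lemma foldl_deltaOpL_coe (l : List A) (f : P →ₗ[ℝ] Q) :
    ⇑(l.foldl (fun g c => deltaOpL c g) f) = l.foldl (fun g c => deltaOp A c g) ⇑f := by
  induction l generalizing f with
  | nil => rfl
  | cons b l ih => simp only [List.foldl_cons, ih, deltaOpL_coe]

/-- The lift `a ⊗ p ↦ a • Δ p` as an `A`-linear map. -/
def liftT (f : P →ₗ[ℝ] Q) : (A ⊗[ℝ] P) →ₗ[A] Q :=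
  TensorProduct.AlgebraTensorModule.lift (LinearMap.toSpanSingleton A (P →ₗ[ℝ] Q) f)

@[simp] lemma liftT_tmul (f : P →ₗ[ℝ] Q) (a : A) (p : P) :
    liftT f (a ⊗ₜ p) = a • f p := rfl

lemma liftT_deltaTensor (f : P →ₗ[ℝ] Q) (b : A) (x : A ⊗[ℝ] P) :
    liftT f (deltaTensor A P b x) = liftT (deltaOpL b f) x := by
  induction x using TensorProduct.induction_on with
  | zero => simp
  | tmul a p =>
      simp only [deltaTensor, LinearMap.sub_apply, TensorProduct.map_tmul,
        LinearMap.id_coe, id_eq, map_sub, liftT_tmul, deltaOpL_coe, deltaOp]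
      simp only [mulA, smulP, LinearMap.mulLeft_apply, LinearMap.coe_mk, AddHom.coe_mk,
        liftT_tmul, smul_sub, mul_smul]
      rw [smul_comm b a]
  | add x y hx hy => simp [map_add, hx, hy]

lemma liftT_foldr (l : List A) (f : P →ₗ[ℝ] Q) (y : A ⊗[ℝ] P) :
    liftT f (l.foldr (fun b z => deltaTensor A P b z) y)
      = liftT (l.foldl (fun g c => deltaOpL c g) f) y := by
  induction l generalizing f with
  | nil => rfl
  | cons b l ih => rw [List.foldr_cons, liftT_deltaTensor, ih, List.foldl_cons]

lemma liftT_zero : liftT (A := A) (0 : P →ₗ[ℝ] Q) = 0 := by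
  apply LinearMap.ext
  intro x
  induction x using TensorProduct.induction_on with
  | zero => simp
  | tmul a p => simp [liftT_tmul]
  | add x y hx hy => simp [map_add, hx, hy]

end Aux

theorem diffOp_factors_uniquely_through_jet
    {A : Type*} [CommRing A] [Algebra ℝ A]
    {P : Type*} [AddCommGroup P] [Module ℝ P] [Module A P] [IsScalarTower ℝ A P]
    {Q : Type*} [AddCommGroup Q] [Module ℝ Q] [Module A Q] [IsScalarTower ℝ A Q]
    (k : ℕ) (Δ : P →ₗ[ℝ] Q) (hΔ : IsDiffOp A k ⇑Δ) :
    ∃! sb : Jet A P k →ₗ[A] Q, ∀ p : P, Δ p = sb (jetMap A P k p) := by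
  have hker : jetSubmodule A P k ≤ LinearMap.ker (liftT Δ) := by
    rw [jetSubmodule, Submodule.span_le]
    rintro x ⟨l, y, hl, rfl⟩
    simp only [SetLike.mem_coe, LinearMap.mem_ker]
    rw [liftT_foldr]
    have h0 : ⇑(l.foldl (fun g c => deltaOpL c g) Δ) = (0 : P → Q) := by
      rw [foldl_deltaOpL_coe]
      have := hΔ l.reverse (by simpa using hl)
      rwa [List.foldr_reverse] at this
    have : l.foldl (fun g c => deltaOpL c g) Δ = 0 := LinearMap.ext fun p => congrFun h0 p
    rw [this, liftT_zero, LinearMap.zero_apply]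
  refine ⟨(jetSubmodule A P k).liftQ (liftT Δ) hker, fun p => ?_, fun sb' hsb' => ?_⟩
  · show Δ p = (jetSubmodule A P k).liftQ (liftT Δ) hker (Submodule.Quotient.mk _)
    rw [Submodule.liftQ_apply, liftT_tmul, one_smul]
  · apply LinearMap.ext
    intro x
    obtain ⟨y, rfl⟩ := Submodule.Quotient.mk_surjective _ x
    induction y using TensorProduct.induction_on with
    | zero =>
        simp only [Submodule.Quotient.mk_zero]
        exact (map_zero sb').trans (map_zero _).symm
    | tmul a p =>
        have hmk : (Submodule.Quotient.mk (a ⊗ₜ[ℝ] p) : Jet A P k)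
            = a • Submodule.Quotient.mk ((1 : A) ⊗ₜ[ℝ] p) := by
          rw [← Submodule.Quotient.mk_smul]
          congr 1
          rw [TensorProduct.smul_tmul', smul_eq_mul, mul_one]
        rw [hmk]
        refine (map_smul sb' a _).trans (Eq.trans ?_ (map_smul _ a _).symm)
        congr 1
        have h1 := (hsb' p).symm
        simp only [jetMap] at h1
        rw [h1]
        show Δ p = (1 : A) • Δ p
        rw [one_smul]
    | add x y hx hy =>
        rw [Submodule.Quotient.mk_add]
        exact (map_add sb' _ _).trans ((congrArg₂ (· + ·) hx hy).trans (map_add _ _ _).symm)
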